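/- Let 0 < b < 1, ℓ ≥ 2, γ > 0, and let m : [0,∞) → (0,∞) be a differentiable function with m(0) = 1 satisfying m(t) ≥ exp(ℓ(1−b)t) for all t ≥ 0 and the differential inequality (d/dt) ln m(t) ≤ ℓ(1−b) + γ e^{(1−b)(ℓ−1)t}/m(t) for all t ≥ 0. Then m(t) ≤ e^{γ/(1−b)} exp(ℓ(1−b)t) for all t ≥ 0. -/

import Mathlib

theorem stmt_7 (b γ : ℝ) (hb0 : 0 < b) (hb1 : b < 1) (ℓ : ℕ) (hℓ : 2 ≤ ℓ)
    (hγ : 0 < γ) (m : ℝ → ℝ) (hdiff : Differentiable ℝ m) (hm0 : m 0 = 1)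
    (hpos : ∀ t ≥ (0:ℝ), 0 < m t)
    (hlow : ∀ t ≥ (0:ℝ), Real.exp (ℓ * (1 - b) * t) ≤ m t)
    (hineq : ∀ t ≥ (0:ℝ),
      deriv (fun s => Real.log (m s)) t ≤
        ℓ * (1 - b) + γ * Real.exp ((1 - b) * (ℓ - 1) * t) / m t) :
    ∀ t ≥ (0:ℝ), m t ≤ Real.exp (γ / (1 - b)) * Real.exp (ℓ * (1 - b) * t) := by
  set c : ℝ := 1 - b with hc
  have hcpos : 0 < c := by simp [hc]; linarith
  set f : ℝ → ℝ := fun s => Real.log (m s) - ℓ * c * s + γ / c * Real.exp (-c * s) with hf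
  have hanti : AntitoneOn f (Set.Ici 0) := by
    apply antitoneOn_of_deriv_nonpos (convex_Ici 0)
    · apply ContinuousOn.add
      · apply ContinuousOn.sub
        · exact ContinuousOn.log hdiff.continuous.continuousOn
            (fun t ht => (hpos t ht).ne')
        · fun_prop
      · fun_prop
    · intro t ht
      rw [interior_Ici] at ht
      have htpos : (0:ℝ) < t := ht
      exact DifferentiableAt.differentiableWithinAt <|
        (((hdiff t).log (hpos t htpos.le).ne').sub (by fun_prop)).add (by fun_prop)
    · intro t ht
      rw [interior_Ici] at ht
      have htpos : (0:ℝ) < t := ht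
      have hmt : 0 < m t := hpos t htpos.le
      have hd1 : DifferentiableAt ℝ (fun s => Real.log (m s)) t :=
        (hdiff t).log hmt.ne'
      have h2 : HasDerivAt (fun s : ℝ => ℓ * c * s) (ℓ * c * 1) t :=
        (hasDerivAt_id t).const_mul _
      have h3 : HasDerivAt (fun s : ℝ => γ / c * Real.exp (-c * s))
          (γ / c * (Real.exp (-c * t) * (-c * 1))) t :=
        (((hasDerivAt_id t).const_mul (-c)).exp).const_mul _
      have hF : HasDerivAt f
          (deriv (fun s => Real.log (m s)) t - ℓ * c * 1
            + γ / c * (Real.exp (-c * t) * (-c * 1))) t :=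
        (hd1.hasDerivAt.sub h2).add h3
      rw [hF.deriv]
      have key : deriv (fun s => Real.log (m s)) t ≤ ℓ * c + γ * Real.exp (-c * t) := by
        have h4 := hineq t htpos.le
        have h5 : γ * Real.exp ((1 - b) * (ℓ - 1) * t) / m t ≤ γ * Real.exp (-c * t) := by
          rw [div_le_iff₀ hmt]
          calc γ * Real.exp ((1 - b) * (ℓ - 1) * t)
              = γ * Real.exp (-c * t) * Real.exp (ℓ * c * t) := by
                have he : (1 - b) * (ℓ - 1) * t = -c * t + ℓ * c * t := by
                  rw [hc]; ring
                rw [he, Real.exp_add]; ring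
            _ ≤ γ * Real.exp (-c * t) * m t := by
                apply mul_le_mul_of_nonneg_left (hlow t htpos.le)
                positivity
        rw [← hc] at h5
        exact h4.trans (add_le_add_right h5 _)
      have hcne : c ≠ 0 := hcpos.ne'
      have : γ / c * (Real.exp (-c * t) * (-c * 1)) = -(γ * Real.exp (-c * t)) := by
        field_simp
      rw [this]
      linarith
  intro t ht
  have hft : f t ≤ f 0 := hanti Set.self_mem_Ici ht ht
  have hf0 : f 0 = γ / c := by simp [hf, hm0]
  have hexp : Real.exp (-c * t) ≥ 0 := (Real.exp_pos _).le
  have hlog : Real.log (m t) ≤ γ / c + ℓ * c * t := by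
    have hgc : 0 ≤ γ / c * Real.exp (-c * t) := by positivity
    have := hft
    rw [hf0] at this
    simp only [hf] at this
    linarith
  calc m t = Real.exp (Real.log (m t)) := (Real.exp_log (hpos t ht)).symm
    _ ≤ Real.exp (γ / c + ℓ * c * t) := Real.exp_le_exp.mpr hlog
    _ = Real.exp (γ / (1 - b)) * Real.exp (ℓ * (1 - b) * t) := by
        rw [Real.exp_add]
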